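/- For every integer k ≥ 1 and g = 3(2k+1), with n = 8g/3 = 16k+8, the two data sets with valencies (1/4, 1/(16k+8), (12k+5)/(16k+8)) and (3/4, 1/(16k+8), (4k+1)/(16k+8)) both satisfy the conditions of Proposition 2.2 (sum of numerators ≡ 0 mod n, Riemann–Hurwitz with orbit genus 0 and genus g, gcd condition), yet no unit u modulo n maps the multiset of valencies of the first to that of the second (i.e., the corresponding periodic maps are not conjugate up to power). -/

import Mathlib

lemma gcd_aux1 (k : ℕ) : Nat.gcd (12 * k + 5) (16 * k + 8) = 1 := by
  set d := Nat.gcd (12 * k + 5) (16 * k + 8) with hd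
  have h1 : d ∣ 12 * k + 5 := Nat.gcd_dvd_left _ _
  have h2 : d ∣ 16 * k + 8 := Nat.gcd_dvd_right _ _
  have h4 : d ∣ 4 := by
    have := Nat.dvd_sub (h2.mul_left 3) (h1.mul_left 4)
    simpa [show 3 * (16 * k + 8) - 4 * (12 * k + 5) = 4 by omega] using this
  have hdle : d ≤ 4 := Nat.le_of_dvd (by norm_num) h4
  have hdpos : 0 < d := Nat.gcd_pos_of_pos_right _ (by omega)
  interval_cases d
  · rfl
  · obtain ⟨a, ha⟩ := h1; omega
  · obtain ⟨a, ha⟩ := h4; omega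
  · obtain ⟨a, ha⟩ := h1; omega

lemma gcd_aux2 (k : ℕ) : Nat.gcd (4 * k + 1) (16 * k + 8) = 1 := by
  set d := Nat.gcd (4 * k + 1) (16 * k + 8) with hd
  have h1 : d ∣ 4 * k + 1 := Nat.gcd_dvd_left _ _
  have h2 : d ∣ 16 * k + 8 := Nat.gcd_dvd_right _ _
  have h4 : d ∣ 4 := by
    have := Nat.dvd_sub h2 (h1.mul_left 4)
    simpa [show 16 * k + 8 - 4 * (4 * k + 1) = 4 by omega] using this
  have hdle : d ≤ 4 := Nat.le_of_dvd (by norm_num) h4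
  have hdpos : 0 < d := Nat.gcd_pos_of_pos_right _ (by omega)
  interval_cases d
  · rfl
  · obtain ⟨a, ha⟩ := h1; omega
  · obtain ⟨a, ha⟩ := h4; omega
  · obtain ⟨a, ha⟩ := h1; omega

lemma gcd_aux3 (k : ℕ) : Nat.gcd (4 * k + 2) (16 * k + 8) = 4 * k + 2 :=
  Nat.gcd_eq_left ⟨4, by ring⟩

lemma gcd_aux4 (k : ℕ) : Nat.gcd (12 * k + 6) (16 * k + 8) = 4 * k + 2 := by
  have : Nat.gcd ((4 * k + 2) * 3) ((4 * k + 2) * 4) = (4 * k + 2) * Nat.gcd 3 4 :=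
    Nat.gcd_mul_left _ _ _
  simpa [show (4 * k + 2) * 3 = 12 * k + 6 by ring,
    show (4 * k + 2) * 4 = 16 * k + 8 by ring] using this

theorem stmt_19 (k : ℕ) (hk : 1 ≤ k) (g n : ℕ)
    (hg : g = 3 * (2 * k + 1)) (hn : n = 16 * k + 8) :
    -- Proposition 2.2 conditions for the first data
    -- valencies: 1/4 = (4k+2)/n, 1/n, (12k+5)/n
    (((4 * k + 2) + 1 + (12 * k + 5)) % n = 0 ∧
     Nat.gcd (Nat.gcd (Nat.gcd (4 * k + 2) 1) (12 * k + 5)) n = 1 ∧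
     2 * ((g : ℚ) - 1) = (n : ℚ) * (-2 + (1 - 1/(n / Nat.gcd (4 * k + 2) n : ℚ))
        + (1 - 1/(n / Nat.gcd 1 n : ℚ)) + (1 - 1/(n / Nat.gcd (12 * k + 5) n : ℚ)))) ∧
    -- Proposition 2.2 conditions for the second data
    -- valencies: 3/4 = (12k+6)/n, 1/n, (4k+1)/n
    (((12 * k + 6) + 1 + (4 * k + 1)) % n = 0 ∧
     Nat.gcd (Nat.gcd (Nat.gcd (12 * k + 6) 1) (4 * k + 1)) n = 1 ∧
     2 * ((g : ℚ) - 1) = (n : ℚ) * (-2 + (1 - 1/(n / Nat.gcd (12 * k + 6) n : ℚ))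
        + (1 - 1/(n / Nat.gcd 1 n : ℚ)) + (1 - 1/(n / Nat.gcd (4 * k + 1) n : ℚ)))) ∧
    -- no unit u mod n maps the first valency multiset to the second under the power
    -- operation: (numerator m, denominator d) ↦ (u * m mod d, d)
    ¬ ∃ u : ℕ, Nat.Coprime u n ∧
      Multiset.map (fun p : ℕ × ℕ => (u * p.1 % p.2, p.2))
        ({(1, 4), (1, n), (12 * k + 5, n)} : Multiset (ℕ × ℕ)) =
      ({(3, 4), (1, n), (4 * k + 1, n)} : Multiset (ℕ × ℕ)) := by
  subst hg hn
  have hk4 : (16 * (k : ℚ) + 8) ≠ 0 := by positivity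
  refine ⟨⟨?_, ?_, ?_⟩, ⟨?_, ?_, ?_⟩, ?_⟩
  · rw [show 4 * k + 2 + 1 + (12 * k + 5) = 16 * k + 8 by ring, Nat.mod_self]
  · simp
  · rw [gcd_aux1, gcd_aux3, Nat.gcd_one_left]
    push_cast
    rw [show (16 * (k:ℚ) + 8) / (4 * k + 2) = 4 by field_simp; ring]
    field_simp
    ring
  · rw [show 12 * k + 6 + 1 + (4 * k + 1) = 16 * k + 8 by ring, Nat.mod_self]
  · simp
  · rw [gcd_aux2, gcd_aux4, Nat.gcd_one_left]
    push_cast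
    rw [show (16 * (k:ℚ) + 8) / (4 * k + 2) = 4 by field_simp; ring]
    field_simp
    ring
  · rintro ⟨u, hcop, heq⟩
    have h1 : (u * 1 % 4, 4) ∈ ({(3, 4), (1, 16 * k + 8), (4 * k + 1, 16 * k + 8)} : Multiset (ℕ × ℕ)) := by
      rw [← heq]
      exact Multiset.mem_map.mpr ⟨(1, 4), by simp, rfl⟩
    have h2 : (u * 1 % (16 * k + 8), 16 * k + 8) ∈ ({(3, 4), (1, 16 * k + 8), (4 * k + 1, 16 * k + 8)} : Multiset (ℕ × ℕ)) := by
      rw [← heq]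
      exact Multiset.mem_map.mpr ⟨(1, 16 * k + 8), by simp, rfl⟩
    simp only [Multiset.insert_eq_cons, Multiset.mem_cons, Multiset.mem_singleton,
      Prod.mk.injEq, mul_one] at h1 h2
    have hmm : u % 4 = u % (16 * k + 8) % 4 :=
      (Nat.mod_mod_of_dvd u ⟨4 * k + 2, by ring⟩).symm
    omega
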